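/- Let I ⊊ S be a proper subset of the simple roots of a finite reduced crystallographic root system Φ with base {α_s : s ∈ S} such that the sub-root system Φ_I = Φ ∩ ℤ-span{α_s : s ∈ I} is irreducible, and let α_I denote the highest root of Φ_I. Let λ be a coweight with α_I(λ) ≥ 2 such that the positive pair condition holds for β = α_I: for every α_I-positive pair (α, α′) of positive roots of Φ, either α(λ) > 0 or α′(λ) ≤ 0. Then ℓ^S(r_{α_I} λ) = ℓ^S(λ) − 1. -/

import Mathlib

open Module

/-- A finite reduced crystallographic root system, spanning the dual of the real vector
space `V`, together with a chosen positive system.  Roots are linear functionals on `V`,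
and `coroot` associates to each root its coroot in `V`. -/
structure PosRootSystem (V : Type*) [AddCommGroup V] [Module ℝ V] where
  /-- the set of roots -/
  roots : Finset (Dual ℝ V)
  /-- the set of positive roots -/
  pos : Finset (Dual ℝ V)
  /-- the coroot of a root -/
  coroot : Dual ℝ V → V
  pos_subset : pos ⊆ roots
  mem_roots_iff : ∀ α, α ∈ roots ↔ (α ∈ pos ∨ -α ∈ pos)
  neg_not_pos : ∀ α ∈ pos, -α ∉ pos
  add_mem_pos : ∀ α ∈ pos, ∀ β ∈ pos, α + β ∈ roots → α + β ∈ pos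
  root_coroot_two : ∀ α ∈ roots, α (coroot α) = 2
  crystallographic : ∀ α ∈ roots, ∀ β ∈ roots, ∃ n : ℤ, α (coroot β) = n
  reduced : ∀ α ∈ roots, ∀ c : ℝ, c • α ∈ roots → c = 1 ∨ c = -1
  reflect_mem : ∀ α ∈ roots, ∀ β ∈ roots, α - α (coroot β) • β ∈ roots
  span_top : Submodule.span ℝ (roots : Set (Dual ℝ V)) = ⊤

namespace PosRootSystem

variable {V : Type*} [AddCommGroup V] [Module ℝ V] (P : PosRootSystem V)

/-- `x` is a coweight: every root takes an integer value on it. -/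
def IsCoweight (x : V) : Prop := ∀ α ∈ P.roots, ∃ n : ℤ, α x = n

/-- The function `f(m) = -m` for `m ≤ 0` and `f(m) = m - 1` for `m > 0`. -/
noncomputable def lenAux (m : ℝ) : ℝ := if m ≤ 0 then -m else m - 1

/-- `ℓ^S(x) = Σ_{α ∈ Φ⁺} f(α(x))`, the length of the minimal coset representative of the
translation `x` in the affine Weyl group modulo the finite Weyl group. -/
noncomputable def lS (x : V) : ℝ := ∑ α ∈ P.pos, lenAux (α x)

/-- The linear reflection `s_β x = x - β(x)·β^∨`. -/
def sRefl (β : Dual ℝ V) (x : V) : V := x - β x • P.coroot β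

/-- The affine reflection `r_β x = s_β x + β^∨` in the hyperplane `β = 1`. -/
def rRefl (β : Dual ℝ V) (x : V) : V := P.sRefl β x + P.coroot β

/-- `(α, α')` is a `β`-positive pair: `α, α'` are positive roots with `α(β^∨) < 0`
and `s_β α = α'`. -/
def IsPosPair (β α α' : Dual ℝ V) : Prop :=
  α ∈ P.pos ∧ α' ∈ P.pos ∧ α (P.coroot β) < 0 ∧ α - α (P.coroot β) • β = α'

/-- `(α, α')` is a `β`-negative pair: `α, α'` are positive roots with `s_β α = -α'`. -/
def IsNegPair (β α α' : Dual ℝ V) : Prop :=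
  α ∈ P.pos ∧ α' ∈ P.pos ∧ α - α (P.coroot β) • β = -α'

/-- The opposite sign condition for `(β, x)`: the two members of every `β`-negative pair
take values of strictly opposite signs on `x`. -/
def OppositeSignCondition (β : Dual ℝ V) (x : V) : Prop :=
  ∀ α α' : Dual ℝ V, P.IsNegPair β α α' →
    (α x < 0 ∧ 0 < α' x) ∨ (0 < α x ∧ α' x < 0)

end PosRootSystem

private def fZ (m : ℤ) : ℤ := if m ≤ 0 then -m else m - 1

private lemma lenAux_intCast (m : ℤ) : PosRootSystem.lenAux (m : ℝ) = ((fZ m : ℤ) : ℝ) := by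
  unfold PosRootSystem.lenAux fZ
  rcases le_or_gt m 0 with h | h
  · rw [if_pos (by exact_mod_cast h), if_pos h]; push_cast; ring
  · rw [if_neg (by push_neg; exact_mod_cast h), if_neg (by omega)]; push_cast; ring

private lemma keyPos (a k p : ℤ) (hk : 1 ≤ k) (hp : 2*k ≤ p)
    (h : 0 < a ∨ a + p ≤ 0) :
    (fZ (a + (p - k)) - fZ a) + (fZ (a + k) - fZ (a + p)) = 0 := by
  unfold fZ; split_ifs <;> omega

private lemma keyNeg (a c : ℤ) :
    (fZ (a + 1 - c) - fZ a) + (fZ (1 - a) - fZ (c - a)) = 0 := by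
  unfold fZ; split_ifs <;> omega

private lemma keyBeta (c : ℤ) (hc : 2 ≤ c) : fZ (2 - c) = fZ c - 1 := by
  unfold fZ; split_ifs <;> omega

set_option maxHeartbeats 1000000 in
/-- Graph-splitting move: if `I ⊊ S` is a proper subset of the simple roots such that the
sub-root system `Φ_I = Φ ∩ ℤ-span{α_s : s ∈ I}` is irreducible with highest root `α_I`,
and `λ` is a coweight with `α_I(λ) ≥ 2` satisfying the positive pair condition for
`β = α_I`, then `ℓ^S(r_{α_I} λ) = ℓ^S(λ) − 1`. -/
theorem graph_splitting_move {V : Type*} [AddCommGroup V] [Module ℝ V]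
    (P : PosRootSystem V)
    {S : Type*} [Fintype S] [DecidableEq S]
    -- the base (simple roots) of `Φ`, indexed by `S`
    (δ : S → Module.Dual ℝ V)
    (hδpos : ∀ s, δ s ∈ P.pos)
    (hind : LinearIndependent ℝ δ)
    (coeff : Module.Dual ℝ V → S → ℤ)
    (hcoeff : ∀ α ∈ P.roots, α = ∑ s, (coeff α s : ℝ) • δ s)
    (hcoeffpos : ∀ α ∈ P.pos, ∀ s, 0 ≤ coeff α s)
    -- a proper subset `I ⊊ S`
    (I : Set S) (hproper : I ≠ Set.univ)
    -- `α_I` is the highest root of the sub-root system `Φ_I` (in particular `Φ_I` is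
    -- irreducible): `α_I` is a positive root lying in the ℤ-span of `{α_s : s ∈ I}`, and
    -- `α_I − α` is a nonnegative combination of positive roots of `Φ_I` for every root
    -- `α` of `Φ_I`
    (αI : Module.Dual ℝ V)
    (hαIpos : αI ∈ P.pos)
    (hαII : αI ∈ AddSubgroup.closure (δ '' I))
    (hhigh : ∀ α ∈ P.roots, α ∈ AddSubgroup.closure (δ '' I) →
      αI - α ∈ AddSubmonoid.closure
        {γ : Module.Dual ℝ V | γ ∈ P.pos ∧ γ ∈ AddSubgroup.closure (δ '' I)})
    -- a coweight `λ` with `α_I(λ) ≥ 2` satisfying the positive pair condition for `α_I`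
    (x : V) (hx : P.IsCoweight x)
    (h2 : 2 ≤ αI x)
    (hppc : ∀ α α' : Module.Dual ℝ V, P.IsPosPair αI α α' → (0 < α x ∨ α' x ≤ 0)) :
    P.lS (P.rRefl αI x) = P.lS x - 1 := by
  classical
  have hβroot : αI ∈ P.roots := P.pos_subset hαIpos
  have hβ2 : αI (P.coroot αI) = 2 := P.root_coroot_two _ hβroot
  obtain ⟨c, hc⟩ := hx αI hβroot
  have hc2 : (2:ℤ) ≤ c := by rw [hc] at h2; exact_mod_cast h2
  set y := P.rRefl αI x with hy0
  have hy : ∀ α : Module.Dual ℝ V, α y = α x + (1 - αI x) * α (P.coroot αI) := by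
    intro α
    simp only [hy0, PosRootSystem.rRefl, PosRootSystem.sRefl, map_add, map_sub, map_smul,
      smul_eq_mul]
    ring
  -- uniqueness of coordinates
  have huniq : ∀ cc d : S → ℝ, ∑ s, cc s • δ s = ∑ s, d s • δ s → ∀ s, cc s = d s := by
    intro cc d hsum s
    have h0 : ∑ s, (cc s - d s) • δ s = 0 := by
      have e : ∑ s, (cc s - d s) • δ s = (∑ s, cc s • δ s) - ∑ s, d s • δ s := by
        rw [← Finset.sum_sub_distrib]
        exact Finset.sum_congr rfl fun s _ => sub_smul (cc s) (d s) (δ s)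
      rw [e, hsum, sub_self]
    have := Fintype.linearIndependent_iff.mp hind _ h0 s
    linarith [this]
  -- αI has a positive coordinate
  have hαIne : ∃ s0, 1 ≤ coeff αI s0 := by
    by_contra hcon
    push_neg at hcon
    have hzero : αI = 0 := by
      rw [hcoeff αI hβroot]
      apply Finset.sum_eq_zero; intro s _
      have h1 := hcoeffpos αI hαIpos s
      have h2' := hcon s
      have : coeff αI s = 0 := by omega
      simp [this]
    rw [hzero] at hβ2; simp at hβ2
  -- coordinates of αI vanish off I
  have hsuppβ : ∀ s ∉ I, coeff αI s = 0 := by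
    have hspan : αI ∈ Submodule.span ℝ (δ '' I) := by
      have hle : AddSubgroup.closure (δ '' I) ≤ (Submodule.span ℝ (δ '' I)).toAddSubgroup :=
        (AddSubgroup.closure_le _).mpr Submodule.subset_span
      exact hle hαII
    obtain ⟨l, hl, hlval⟩ := (Finsupp.mem_span_image_iff_linearCombination ℝ).mp hspan
    have hrep : αI = ∑ s, l s • δ s := by
      rw [← hlval, Finsupp.linearCombination_apply, Finsupp.sum_fintype]
      intro s; simp
    intro s hs
    have h1 : (coeff αI s : ℝ) = l s := huniq _ _ ((hcoeff αI hβroot).symm.trans hrep) s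
    have h2' : l s = 0 := (Finsupp.mem_supported' ℝ l).mp hl s hs
    exact_mod_cast h1.trans h2'
  -- membership in the group closure from support condition
  have hmemclos : ∀ α ∈ P.roots, (∀ s ∉ I, coeff α s = 0) →
      α ∈ AddSubgroup.closure (δ '' I) := by
    intro α hα hsupp
    rw [hcoeff α hα]
    refine AddSubgroup.sum_mem _ fun s _ => ?_
    by_cases hs : s ∈ I
    · have e := Int.cast_smul_eq_zsmul ℝ (coeff α s) (δ s)
      rw [e]
      exact AddSubgroup.zsmul_mem _ (AddSubgroup.subset_closure (Set.mem_image_of_mem δ hs)) _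
    · rw [hsupp s hs]; simpa using (AddSubgroup.closure (δ '' I)).zero_mem
  -- nonnegative representation for elements of the monoid closure
  have hQ : ∀ γ, γ ∈ AddSubmonoid.closure
        {γ : Module.Dual ℝ V | γ ∈ P.pos ∧ γ ∈ AddSubgroup.closure (δ '' I)} →
      ∃ cc : S → ℝ, (∀ s, 0 ≤ cc s) ∧ γ = ∑ s, cc s • δ s := by
    intro γ hγ
    refine AddSubmonoid.closure_induction ?_ ?_ ?_ hγ
    · intro γ' hγ'
      refine ⟨fun s => (coeff γ' s : ℝ), fun s => ?_, hcoeff γ' (P.pos_subset hγ'.1)⟩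
      exact Int.cast_nonneg (hcoeffpos γ' hγ'.1 s)
    · exact ⟨0, fun s => le_refl 0, by simp⟩
    · rintro γ1 γ2 _ _ ⟨c1, hc1n, hc1⟩ ⟨c2, hc2n, hc2⟩
      refine ⟨fun s => c1 s + c2 s, fun s => add_nonneg (hc1n s) (hc2n s), ?_⟩
      rw [hc1, hc2, ← Finset.sum_add_distrib]
      exact Finset.sum_congr rfl fun s _ => (add_smul _ _ _).symm
  -- the negative-pair dichotomy
  have Hneg : ∀ α, α ∈ P.pos → α ≠ αI → (α - α (P.coroot αI) • αI) ∉ P.pos →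
      α (P.coroot αI) = 1 ∧ αI - α ∈ P.pos ∧ αI - α ≠ αI ∧ αI - α ≠ α := by
    intro α hαpos hαne hsneg
    have hαroot : α ∈ P.roots := P.pos_subset hαpos
    obtain ⟨n, hn⟩ := P.crystallographic α hαroot αI hβroot
    have hsroot : α - α (P.coroot αI) • αI ∈ P.roots := P.reflect_mem α hαroot αI hβroot
    have hα'pos : -(α - α (P.coroot αI) • αI) ∈ P.pos := by
      rcases (P.mem_roots_iff _).mp hsroot with h | h
      · exact absurd h hsneg
      · exact h
    set α' : Module.Dual ℝ V := -(α - α (P.coroot αI) • αI) with hα'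
    have hα'root : α' ∈ P.roots := P.pos_subset hα'pos
    have hsum : α + α' = (n : ℝ) • αI := by rw [hα', ← hn]; module
    have hco : ∀ s, (coeff α s : ℝ) + (coeff α' s : ℝ) = (n : ℝ) * (coeff αI s : ℝ) := by
      refine fun s => huniq (fun s => (coeff α s : ℝ) + (coeff α' s : ℝ))
        (fun s => (n:ℝ) * (coeff αI s : ℝ)) ?_ s
      have e1 : ∑ s, ((coeff α s : ℝ) + (coeff α' s : ℝ)) • δ s = α + α' := by
        conv_rhs => rw [hcoeff α hαroot, hcoeff α' hα'root]
        rw [← Finset.sum_add_distrib]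
        exact Finset.sum_congr rfl fun s _ => add_smul ((coeff α s : ℝ)) ((coeff α' s : ℝ)) (δ s)
      have e2 : (n : ℝ) • αI = ∑ s, ((n:ℝ) * (coeff αI s : ℝ)) • δ s := by
        conv_lhs => rw [hcoeff αI hβroot]
        rw [Finset.smul_sum]
        exact Finset.sum_congr rfl fun s _ => smul_smul _ (((coeff αI s : ℤ) : ℝ)) (δ s)
      rw [e1, hsum, e2]
    have hcoZ : ∀ s, coeff α s + coeff α' s = n * coeff αI s := by
      intro s; exact_mod_cast hco s
    obtain ⟨s0, hs0⟩ := hαIne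
    have hn0 : n ≠ 0 := by
      intro h0
      have hzero : α' = -α := by
        have : α + α' = 0 := by rw [hsum, h0]; simp
        linear_combination (norm := module) this
      exact P.neg_not_pos α hαpos (hzero ▸ hα'pos)
    have hn1 : 1 ≤ n := by
      rcases lt_or_ge n 0 with hlt | hle
      · exfalso
        have h1 := hcoeffpos α hαpos s0
        have h2' := hcoeffpos α' hα'pos s0
        have h3 := hcoZ s0
        nlinarith
      · omega
    have hsuppα : ∀ s ∉ I, coeff α s = 0 := by
      intro s hs
      have h3 := hcoZ s
      rw [hsuppβ s hs, mul_zero] at h3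
      have h1 := hcoeffpos α hαpos s
      have h2' := hcoeffpos α' hα'pos s
      omega
    have hsuppα' : ∀ s ∉ I, coeff α' s = 0 := by
      intro s hs
      have h3 := hcoZ s
      rw [hsuppβ s hs, mul_zero] at h3
      have h1 := hcoeffpos α hαpos s
      have h2' := hcoeffpos α' hα'pos s
      omega
    obtain ⟨c1, hc1n, hc1⟩ := hQ _ (hhigh α hαroot (hmemclos α hαroot hsuppα))
    obtain ⟨c2, hc2n, hc2⟩ := hQ _ (hhigh α' hα'root (hmemclos α' hα'root hsuppα'))
    have hkey : ∀ s, c1 s + c2 s = (2 - (n:ℝ)) * (coeff αI s : ℝ) := by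
      refine fun s => huniq (fun s => c1 s + c2 s)
        (fun s => (2 - (n:ℝ)) * (coeff αI s : ℝ)) ?_ s
      have e1 : ∑ s, (c1 s + c2 s) • δ s = (αI - α) + (αI - α') := by
        rw [hc1, hc2, ← Finset.sum_add_distrib]
        exact Finset.sum_congr rfl fun s _ => add_smul (c1 s) (c2 s) (δ s)
      have e2 : (αI - α) + (αI - α') = (2 - (n:ℝ)) • αI := by
        linear_combination (norm := module) -hsum
      have e3 : (2 - (n:ℝ)) • αI = ∑ s, ((2 - (n:ℝ)) * (coeff αI s : ℝ)) • δ s := by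
        conv_lhs => rw [hcoeff αI hβroot]
        rw [Finset.smul_sum]
        exact Finset.sum_congr rfl fun s _ => smul_smul _ (((coeff αI s : ℤ) : ℝ)) (δ s)
      rw [e1, e2, e3]
    have hn2 : n < 2 := by
      by_contra hge
      push_neg at hge
      have hall : ∀ s, c1 s = 0 := by
        intro s
        have h1 := hkey s
        have h2' := hc1n s
        have h3 := hc2n s
        have h4 : (0:ℝ) ≤ (coeff αI s : ℝ) := by exact_mod_cast hcoeffpos αI hαIpos s
        have h5 : ((2:ℝ) - n) ≤ 0 := by
          have : (2:ℝ) ≤ (n:ℝ) := by exact_mod_cast hge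
          linarith
        have h6 : ((2:ℝ) - (n:ℝ)) * (coeff αI s : ℝ) ≤ 0 :=
          mul_nonpos_iff.mpr (Or.inr ⟨h5, h4⟩)
        linarith
      have hz : αI - α = 0 := by
        rw [hc1]
        apply Finset.sum_eq_zero
        intro s _
        rw [hall s, zero_smul]
      exact hαne (sub_eq_zero.mp hz).symm
    have hnval : n = 1 := by omega
    have hv1 : α (P.coroot αI) = 1 := by rw [hn, hnval]; norm_num
    have hα'eq : α' = αI - α := by
      rw [hα', hv1]; module
    have hne1 : αI - α ≠ αI := by
      intro h
      have hα0 : α = 0 := by linear_combination (norm := module) -h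
      have := P.neg_not_pos α hαpos
      rw [hα0, neg_zero] at this
      rw [hα0] at hαpos
      exact this hαpos
    have hne2 : αI - α ≠ α := by
      intro h
      have h2α : (2:ℝ) • α = αI := by linear_combination (norm := module) -h
      have := P.reduced α hαroot 2 (by rw [h2α]; exact hβroot)
      rcases this with h' | h' <;> norm_num at h'
    exact ⟨hv1, hα'eq ▸ hα'pos, hne1, hne2⟩
  -- the involution argument
  have hsum0 : ∑ α ∈ P.pos.erase αI,
      (PosRootSystem.lenAux (α y) - PosRootSystem.lenAux (α x)) = 0 := by
    refine Finset.sum_involution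
      (fun α _ => if (α - α (P.coroot αI) • αI) ∈ P.pos then α - α (P.coroot αI) • αI
        else -(α - α (P.coroot αI) • αI)) ?_ ?_ ?_ ?_
    · -- pairing sums vanish
      intro α hα
      obtain ⟨hαne, hαpos⟩ := Finset.mem_erase.mp hα
      have hαroot := P.pos_subset hαpos
      obtain ⟨n, hn⟩ := P.crystallographic α hαroot αI hβroot
      obtain ⟨a, ha⟩ := hx α hαroot
      by_cases hcase : (α - α (P.coroot αI) • αI) ∈ P.pos
      · simp only [if_pos hcase]
        have hsx : (α - α (P.coroot αI) • αI) x = ((a + (-n) * c : ℤ) : ℝ) := by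
          simp only [LinearMap.sub_apply, LinearMap.smul_apply, smul_eq_mul]
          rw [ha, hn, hc]; push_cast; ring
        have hsv : (α - α (P.coroot αI) • αI) (P.coroot αI) = ((-n : ℤ) : ℝ) := by
          simp only [LinearMap.sub_apply, LinearMap.smul_apply, smul_eq_mul]
          rw [hn, hβ2]; push_cast; ring
        rcases lt_trichotomy n 0 with hneg | hzero | hpos
        · -- n < 0 : (α, sα) is a positive pair
          have hαy : α y = ((a + ((-n) * c - -n) : ℤ) : ℝ) := by
            rw [hy α, ha, hn, hc]; push_cast; ring
          have hsy : (α - α (P.coroot αI) • αI) y = ((a + -n : ℤ) : ℝ) := by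
            rw [hy (α - α (P.coroot αI) • αI), hsx, hsv, hc]; push_cast; ring
          have hpair : P.IsPosPair αI α (α - α (P.coroot αI) • αI) :=
            ⟨hαpos, hcase, by rw [hn]; exact_mod_cast hneg, rfl⟩
          have hh := hppc α _ hpair
          rw [ha, hsx] at hh
          have hhZ : 0 < a ∨ a + (-n) * c ≤ 0 := by
            rcases hh with h | h
            · left; exact_mod_cast h
            · right; exact_mod_cast h
          have hmul : 2 * (-n) ≤ (-n) * c := by
            have := mul_le_mul_of_nonneg_left hc2 (by omega : (0:ℤ) ≤ -n)
            linarith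
          have h0 := keyPos a (-n) ((-n) * c) (by omega) hmul hhZ
          rw [hαy, hsy, ha, hsx, lenAux_intCast, lenAux_intCast, lenAux_intCast,
            lenAux_intCast]
          have h0R := congrArg (fun m : ℤ => (m : ℝ)) h0
          push_cast at h0R
          linarith [h0R]
        · -- n = 0
          have hv0 : α (P.coroot αI) = 0 := by rw [hn, hzero]; norm_num
          have hsa : α - α (P.coroot αI) • αI = α := by rw [hv0]; simp
          have hyx : α y = α x := by rw [hy α, hv0]; ring
          rw [hsa, hyx]; ring
        · -- n > 0 : (sα, α) is a positive pair
          have hsx' : (α - α (P.coroot αI) • αI) x = ((a - n * c : ℤ) : ℝ) := by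
            simp only [LinearMap.sub_apply, LinearMap.smul_apply, smul_eq_mul]
            rw [ha, hn, hc]; push_cast; ring
          have hαy : α y = (((a - n * c) + n : ℤ) : ℝ) := by
            rw [hy α, ha, hn, hc]; push_cast; ring
          have hαx : α x = (((a - n * c) + n * c : ℤ) : ℝ) := by rw [ha]; push_cast; ring
          have hsy : (α - α (P.coroot αI) • αI) y = (((a - n * c) + (n * c - n) : ℤ) : ℝ) := by
            rw [hy (α - α (P.coroot αI) • αI), hsx', hsv, hc]; push_cast; ring
          have hs2 : (α - α (P.coroot αI) • αI) -
              (α - α (P.coroot αI) • αI) (P.coroot αI) • αI = α := by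
            rw [hsv, hn]; push_cast; module
          have hpair : P.IsPosPair αI (α - α (P.coroot αI) • αI) α :=
            ⟨hcase, hαpos, by rw [hsv]; exact_mod_cast (by omega : (-n : ℤ) < 0), hs2⟩
          have hh := hppc _ α hpair
          rw [ha, hsx'] at hh
          have hhZ : 0 < a - n * c ∨ (a - n * c) + n * c ≤ 0 := by
            rcases hh with h | h
            · left; exact_mod_cast h
            · right
              have : (a : ℝ) ≤ 0 := h
              have haZ : a ≤ 0 := by exact_mod_cast this
              linarith
          have hmul : 2 * n ≤ n * c := by
            have := mul_le_mul_of_nonneg_left hc2 (by omega : (0:ℤ) ≤ n)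
            linarith
          have h0 := keyPos (a - n * c) n (n * c) (by omega) hmul hhZ
          rw [hαy, hαx, hsy, hsx', lenAux_intCast, lenAux_intCast, lenAux_intCast,
            lenAux_intCast]
          have h0R := congrArg (fun m : ℤ => (m : ℝ)) h0
          push_cast at h0R
          linarith [h0R]
      · -- negative pair
        simp only [if_neg hcase]
        obtain ⟨hv1, hα'pos, hne1, hne2⟩ := Hneg α hαpos hαne hcase
        have hrw : -(α - α (P.coroot αI) • αI) = αI - α := by rw [hv1]; module
        rw [hrw]
        have hαy : α y = ((a + 1 - c : ℤ) : ℝ) := by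
          rw [hy α, ha, hv1, hc]; push_cast; ring
        have hα'x : (αI - α) x = ((c - a : ℤ) : ℝ) := by
          simp only [LinearMap.sub_apply]; rw [hc, ha]; push_cast; ring
        have hα'v : (αI - α) (P.coroot αI) = 1 := by
          simp only [LinearMap.sub_apply]; rw [hβ2, hv1]; ring
        have hα'y : (αI - α) y = ((1 - a : ℤ) : ℝ) := by
          rw [hy (αI - α), hα'x, hα'v, hc]; push_cast; ring
        have h0 := keyNeg a c
        rw [hαy, hα'y, hα'x, ha, lenAux_intCast, lenAux_intCast, lenAux_intCast,
          lenAux_intCast]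
        have h0R := congrArg (fun m : ℤ => (m : ℝ)) h0
        push_cast at h0R
        linarith [h0R]
    · -- σ has no honest fixed points
      intro α hα hfne
      obtain ⟨hαne, hαpos⟩ := Finset.mem_erase.mp hα
      have hαroot := P.pos_subset hαpos
      by_cases hcase : (α - α (P.coroot αI) • αI) ∈ P.pos
      · simp only [if_pos hcase]
        intro heq
        rw [sub_eq_self] at heq
        rcases smul_eq_zero.mp heq with hk0 | hI0
        · have hyx : α y = α x := by rw [hy α, hk0]; ring
          exact hfne (by rw [hyx]; ring)
        · rw [hI0] at hβ2; simp at hβ2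
      · simp only [if_neg hcase]
        intro heq
        obtain ⟨hv1, hα'pos, hne1, hne2⟩ := Hneg α hαpos hαne hcase
        have hrw : -(α - α (P.coroot αI) • αI) = αI - α := by rw [hv1]; module
        rw [hrw] at heq
        exact hne2 heq
    · -- σ maps the set to itself
      intro α hα
      obtain ⟨hαne, hαpos⟩ := Finset.mem_erase.mp hα
      have hαroot := P.pos_subset hαpos
      by_cases hcase : (α - α (P.coroot αI) • αI) ∈ P.pos
      · simp only [if_pos hcase]
        refine Finset.mem_erase.mpr ⟨?_, hcase⟩
        intro heq
        have h1 := congrArg (fun f : Module.Dual ℝ V => f (P.coroot αI)) heq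
        simp only [LinearMap.sub_apply, LinearMap.smul_apply, smul_eq_mul, hβ2] at h1
        have h3 : α (P.coroot αI) = -2 := by linarith
        rw [sub_eq_iff_eq_add, h3] at heq
        have h4 : α = -αI := by rw [heq]; module
        exact P.neg_not_pos αI hαIpos (h4 ▸ hαpos)
      · simp only [if_neg hcase]
        obtain ⟨hv1, hα'pos, hne1, hne2⟩ := Hneg α hαpos hαne hcase
        have hrw : -(α - α (P.coroot αI) • αI) = αI - α := by rw [hv1]; module
        rw [hrw]
        exact Finset.mem_erase.mpr ⟨hne1, hα'pos⟩
    · -- σ is an involution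
      intro α hα
      obtain ⟨hαne, hαpos⟩ := Finset.mem_erase.mp hα
      have hαroot := P.pos_subset hαpos
      by_cases hcase : (α - α (P.coroot αI) • αI) ∈ P.pos
      · simp only [if_pos hcase]
        have hsv : (α - α (P.coroot αI) • αI) (P.coroot αI) = -(α (P.coroot αI)) := by
          simp only [LinearMap.sub_apply, LinearMap.smul_apply, smul_eq_mul, hβ2]; ring
        have hs2 : (α - α (P.coroot αI) • αI) -
            (α - α (P.coroot αI) • αI) (P.coroot αI) • αI = α := by
          rw [hsv]; module
        rw [hs2, if_pos hαpos]
      · simp only [if_neg hcase]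
        have hsv2 : (-(α - α (P.coroot αI) • αI)) (P.coroot αI) = α (P.coroot αI) := by
          simp only [LinearMap.neg_apply, LinearMap.sub_apply, LinearMap.smul_apply,
            smul_eq_mul, hβ2]
          ring
        have hs3 : (-(α - α (P.coroot αI) • αI)) -
            (-(α - α (P.coroot αI) • αI)) (P.coroot αI) • αI = -α := by
          rw [hsv2]; module
        rw [hs3, if_neg (P.neg_not_pos α hαpos), neg_neg]
  -- assembling
  have hErase : ∑ α ∈ P.pos.erase αI, PosRootSystem.lenAux (α y)
      = ∑ α ∈ P.pos.erase αI, PosRootSystem.lenAux (α x) := by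
    have h := hsum0
    rw [Finset.sum_sub_distrib] at h
    linarith
  have hβx : PosRootSystem.lenAux (αI x) = ((fZ c : ℤ) : ℝ) := by rw [hc, lenAux_intCast]
  have hβy : PosRootSystem.lenAux (αI y) = ((fZ (2 - c) : ℤ) : ℝ) := by
    have hv : αI y = ((2 - c : ℤ) : ℝ) := by rw [hy αI, hβ2, hc]; push_cast; ring
    rw [hv, lenAux_intCast]
  rw [PosRootSystem.lS, PosRootSystem.lS,
    ← Finset.add_sum_erase P.pos (fun α => PosRootSystem.lenAux (α y)) hαIpos,
    ← Finset.add_sum_erase P.pos (fun α => PosRootSystem.lenAux (α x)) hαIpos,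
    hErase, hβx, hβy, keyBeta c hc2]
  push_cast
  ring
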